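/- Let n ≥ 3 be odd and s real. Then the product ∏_{k=0}^{(n−3)/2} (1 + s²n²/(4(2k+1)²))^{1/2} is at most (cosh(πsn/4))^{1/2}, and hence at most e^{π|s|n/8}. -/

import Mathlib

open Real Finset Filter Topology

/-- For odd `n ≥ 3`,
`∏_{k=0}^{(n−3)/2} (1 + s²n²/(4(2k+1)²))^{1/2} ≤ (cosh(πsn/4))^{1/2} ≤ e^{π|s|n/8}`. -/

lemma factor_eq (y : ℝ) (j : ℕ) :
    ‖(1 : ℂ) - (((1 + (y:ℂ)*Complex.I)/2)^2) / ((j:ℂ)+1)^2‖^2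
    = (1 + y^2/(2*(j:ℝ)+1)^2) * (1 + y^2/(2*(j:ℝ)+3)^2)
      * (((2*(j:ℝ)+1)*(2*(j:ℝ)+3))/((2*(j:ℝ)+2)^2))^2 := by
  have hc : ((j:ℝ)+1) ≠ 0 := by positivity
  set c : ℝ := (j:ℝ)+1 with hcdef
  have hw : (1 : ℂ) - (((1 + (y:ℂ)*Complex.I)/2)^2) / ((j:ℂ)+1)^2
      = ((1 - (1-y^2)/(4*c^2) : ℝ) : ℂ) + ((-(y/(2*c^2)) : ℝ) : ℂ) * Complex.I := by
    have h1 : ((j:ℂ)+1) = ((c:ℝ):ℂ) := by push_cast [hcdef]; ring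
    have hc' : ((c:ℝ):ℂ) ≠ 0 := by exact_mod_cast hc
    rw [h1]
    push_cast
    linear_combination (-(y:ℂ)^2/(4*((c:ℝ):ℂ)^2)) * Complex.I_sq
  rw [hw, ← Complex.normSq_eq_norm_sq, Complex.normSq_add_mul_I]
  have h1 : (2*(j:ℝ)+1) = 2*c - 1 := by rw [hcdef]; ring
  have h2 : (2*(j:ℝ)+3) = 2*c + 1 := by rw [hcdef]; ring
  have h3 : (2*(j:ℝ)+2) = 2*c := by rw [hcdef]; ring
  rw [h1, h2, h3]
  have hm : 2*c - 1 ≠ 0 := by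
    have h0 : (0:ℝ) ≤ (j:ℝ) := Nat.cast_nonneg j
    rw [hcdef]; intro h; nlinarith
  have hp : 2*c + 1 ≠ 0 := by rw [hcdef]; positivity
  field_simp
  field_simp
  ring

lemma prod_le_cosh (y : ℝ) (m : ℕ) :
    ∏ k ∈ range (m+1), (1 + y^2/(2*(k:ℝ)+1)^2) ≤ Real.cosh (π*y/2) := by
  set f : ℕ → ℝ := fun k => 1 + y^2/(2*(k:ℝ)+1)^2 with hf
  have hf1 : ∀ k, 1 ≤ f k := by
    intro k; simp only [hf]
    nlinarith [div_nonneg (sq_nonneg y) (sq_nonneg (2*(k:ℝ)+1))]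
  have hone : ∀ (s : Finset ℕ), 1 ≤ ∏ k ∈ s, f k := by
    intro s
    calc (1:ℝ) = ∏ k ∈ s, 1 := by simp
    _ ≤ ∏ k ∈ s, f k := Finset.prod_le_prod (by intros; norm_num) (fun i _ => hf1 i)
  set A : ℝ := ∏ k ∈ range (m+1), f k with hA
  have hA1 : 1 ≤ A := hone _
  have hAle : ∀ N, m+1 ≤ N → A ≤ ∏ k ∈ range N, f k := by
    intro N hN
    rw [hA, ← Finset.prod_range_mul_prod_Ico f hN]
    exact le_mul_of_one_le_right (le_trans zero_le_one (hone _)) (hone _)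
  set z : ℂ := (1 + (y:ℂ)*Complex.I)/2 with hz
  have hsin : Complex.sin ((π:ℂ) * z) = ((Real.cosh (π*y/2) : ℝ) : ℂ) := by
    have h1 : (π:ℂ) * z = (((π/2 : ℝ)):ℂ) + (((π*y/2 : ℝ)):ℂ) * Complex.I := by
      rw [hz]; push_cast; ring
    rw [h1, Complex.sin_add]
    push_cast
    rw [Complex.sin_pi_div_two, Complex.cos_pi_div_two, Complex.cos_mul_I]
    ring
  have htend : Tendsto (fun N : ℕ =>
      ‖(π:ℂ) * z * ∏ j ∈ range N, ((1:ℂ) - z^2/((j:ℂ)+1)^2)‖) atTop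
      (nhds (Real.cosh (π*y/2))) := by
    have h := (Complex.tendsto_euler_sin_prod z).norm
    rw [hsin, Complex.norm_real, Real.norm_eq_abs, abs_of_pos (Real.cosh_pos _)] at h
    exact h
  have htend2 := htend.pow 2
  set V : ℕ → ℝ := fun N => ∏ i ∈ range N, ((2:ℝ)*i+2)/(2*i+1) * ((2*i+2)/(2*i+3)) with hV
  have hVt : Tendsto V atTop (nhds (π/2)) := Real.tendsto_prod_pi_div_two
  have hkey : ∀ N : ℕ,
      ‖(π:ℂ) * z * ∏ j ∈ range N, ((1:ℂ) - z^2/((j:ℂ)+1)^2)‖^2 * (V N)^2 * 4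
      = (∏ j ∈ range (N+1), f j) * (∏ j ∈ range N, f j) * π^2 := by
    intro N
    have hnorm : ‖(π:ℂ) * z * ∏ j ∈ range N, ((1:ℂ) - z^2/((j:ℂ)+1)^2)‖^2
        = ‖(π:ℂ) * z‖^2 * ∏ j ∈ range N, ‖(1:ℂ) - z^2/((j:ℂ)+1)^2‖^2 := by
      rw [norm_mul, mul_pow, norm_prod, ← Finset.prod_pow]
    have hpz : ‖(π:ℂ) * z‖^2 = π^2/4 * f 0 := by
      have h1 : (π:ℂ) * z = (((π/2 : ℝ)):ℂ) + (((π*y/2 : ℝ)):ℂ) * Complex.I := by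
        rw [hz]; push_cast; ring
      rw [h1, ← Complex.normSq_eq_norm_sq, Complex.normSq_add_mul_I]
      simp only [hf]
      push_cast
      field_simp
      ring
    have hfac : ∀ j : ℕ, ‖(1:ℂ) - z^2/((j:ℂ)+1)^2‖^2
        = f j * f (j+1) * (((2*(j:ℝ)+1)*(2*(j:ℝ)+3))/((2*(j:ℝ)+2)^2))^2 := by
      intro j
      rw [hz, factor_eq y j]
      simp only [hf]
      push_cast
      ring
    have hshift : (∏ j ∈ range N, f (j+1)) * f 0 = ∏ j ∈ range (N+1), f j :=
      (Finset.prod_range_succ' f N).symm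
    have hw : (∏ j ∈ range N, (((2*(j:ℝ)+1)*(2*(j:ℝ)+3))/((2*(j:ℝ)+2)^2))^2) * (V N)^2 = 1 := by
      rw [hV, ← Finset.prod_pow, ← Finset.prod_mul_distrib]
      apply Finset.prod_eq_one
      intro i _
      have h1 : (2*(i:ℝ)+1) ≠ 0 := by positivity
      have h2 : (2*(i:ℝ)+2) ≠ 0 := by positivity
      have h3 : (2*(i:ℝ)+3) ≠ 0 := by positivity
      field_simp
    rw [hnorm, hpz, Finset.prod_congr rfl (fun j _ => hfac j),
      Finset.prod_mul_distrib, Finset.prod_mul_distrib, ← hshift]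
    linear_combination (π^2 * f 0 * (∏ x ∈ range N, f x) * (∏ x ∈ range N, f (x+1))) * hw
  have htend3 : Tendsto (fun N : ℕ =>
      ‖(π:ℂ) * z * ∏ j ∈ range N, ((1:ℂ) - z^2/((j:ℂ)+1)^2)‖^2 * (V N)^2 * 4) atTop
      (nhds (Real.cosh (π*y/2)^2 * π^2)) := by
    have h := (htend2.mul (hVt.pow 2)).mul_const 4
    have : Real.cosh (π*y/2)^2 * (π/2)^2 * 4 = Real.cosh (π*y/2)^2 * π^2 := by ring
    rwa [this] at h
  have hev : ∀ᶠ N in atTop, A * A * π^2 ≤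
      ‖(π:ℂ) * z * ∏ j ∈ range N, ((1:ℂ) - z^2/((j:ℂ)+1)^2)‖^2 * (V N)^2 * 4 := by
    filter_upwards [eventually_ge_atTop (m+1)] with N hN
    rw [hkey N]
    have h1 : A ≤ ∏ j ∈ range (N+1), f j := hAle _ (le_trans hN (Nat.le_succ N))
    have h2 : A ≤ ∏ j ∈ range N, f j := hAle _ hN
    have hApos : (0:ℝ) ≤ A := le_trans zero_le_one hA1
    have hpi2 : (0:ℝ) ≤ π^2 := sq_nonneg π
    have : A * A ≤ (∏ j ∈ range (N+1), f j) * (∏ j ∈ range N, f j) :=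
      mul_le_mul h1 h2 hApos (le_trans hApos h1)
    nlinarith
  have hfin : A * A * π^2 ≤ Real.cosh (π*y/2)^2 * π^2 :=
    ge_of_tendsto htend3 hev
  have hA2 : A^2 ≤ Real.cosh (π*y/2)^2 := by
    have hpi : (0:ℝ) < π^2 := by positivity
    nlinarith
  calc A = Real.sqrt (A^2) := (Real.sqrt_sq (le_trans zero_le_one hA1)).symm
  _ ≤ Real.sqrt (Real.cosh (π*y/2)^2) := Real.sqrt_le_sqrt hA2
  _ = Real.cosh (π*y/2) := Real.sqrt_sq (Real.cosh_pos _).le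

lemma sqrt_prod' (t : Finset ℕ) (g : ℕ → ℝ) (h : ∀ i ∈ t, 0 ≤ g i) :
    ∏ i ∈ t, Real.sqrt (g i) = Real.sqrt (∏ i ∈ t, g i) := by
  induction t using Finset.cons_induction with
  | empty => simp
  | cons a t ha ih =>
    rw [Finset.prod_cons, Finset.prod_cons,
      Real.sqrt_mul (h a (Finset.mem_cons_self a t)),
      ih (fun i hi => h i (Finset.mem_cons_of_mem hi))]

theorem odd_case_product_bound (n : ℕ) (hn : 3 ≤ n) (hodd : Odd n) (s : ℝ) :
    (∏ k ∈ Finset.range ((n - 3) / 2 + 1),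
        Real.sqrt (1 + s ^ 2 * (n : ℝ) ^ 2 / (4 * (2 * (k : ℝ) + 1) ^ 2)) ≤
      Real.sqrt (Real.cosh (π * s * n / 4))) ∧
    Real.sqrt (Real.cosh (π * s * n / 4)) ≤ Real.exp (π * |s| * n / 8) := by
  set y : ℝ := s * n / 2 with hy
  have hfe : ∀ k : ℕ, 1 + s ^ 2 * (n:ℝ) ^ 2 / (4 * (2 * (k:ℝ) + 1) ^ 2)
      = 1 + y ^ 2 / (2 * (k:ℝ) + 1) ^ 2 := by
    intro k
    have h : (2 * (k:ℝ) + 1) ≠ 0 := by positivity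
    rw [hy]; field_simp; ring
  have harg : π * s * (n:ℝ) / 4 = π * y / 2 := by rw [hy]; ring
  constructor
  · rw [Finset.prod_congr rfl (fun k _ => by rw [hfe k])]
    rw [sqrt_prod' _ _ (fun k _ => by
      have := div_nonneg (sq_nonneg y) (sq_nonneg (2 * (k:ℝ) + 1)); linarith)]
    rw [harg]
    exact Real.sqrt_le_sqrt (prod_le_cosh y _)
  · have hch : Real.cosh (π * s * n / 4) ≤ Real.exp |π * s * n / 4| := by
      rw [Real.cosh_eq]
      have h1 : Real.exp (π * s * n / 4) ≤ Real.exp |π * s * n / 4| :=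
        Real.exp_le_exp.mpr (le_abs_self _)
      have h2 : Real.exp (-(π * s * n / 4)) ≤ Real.exp |π * s * n / 4| :=
        Real.exp_le_exp.mpr (neg_le_abs _)
      linarith
    have habs : |π * s * (n:ℝ) / 4| = π * |s| * n / 4 := by
      rw [abs_div, abs_mul, abs_mul, abs_of_nonneg Real.pi_nonneg,
        Nat.abs_cast]
      norm_num
    calc Real.sqrt (Real.cosh (π * s * n / 4))
        ≤ Real.sqrt (Real.exp |π * s * n / 4|) := Real.sqrt_le_sqrt hch
      _ = Real.exp (|π * s * n / 4| / 2) := (Real.exp_half _).symm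
      _ = Real.exp (π * |s| * n / 8) := by rw [habs]; ring_nf
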